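/- For all simple regular expressions E₁, E₂ over an alphabet α and every nonempty word w over α: ∂_w(E₁)⊙E₂ ⊆ ∂_w(E₁·E₂) ⊆ (∂_w(E₁)⊙E₂) ∪ ⋃_{v} ∂_v(E₂), where v ranges over the nonempty suffixes of w and 𝒮⊙F = {G·F | G ∈ 𝒮}. -/
import Mathlib

open scoped Classical

/-- The Antimirov partial derivative of a regular expression with respect to a symbol. -/
noncomputable def aderiv {α : Type*} (a : α) : RegularExpression α → Set (RegularExpression α)
  | .zero => ∅
  | .epsilon => ∅
  | .char b => if b = a then {1} else ∅
  | .plus E₁ E₂ => aderiv a E₁ ∪ aderiv a E₂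
  | .comp E₁ E₂ =>
      if [] ∈ E₁.matches' then ((· * E₂) '' aderiv a E₁) ∪ aderiv a E₂
      else (· * E₂) '' aderiv a E₁
  | .star E₁ => (· * E₁.star) '' aderiv a E₁

/-- Iterated Antimirov partial derivative with respect to a word. -/
noncomputable def aderivWord {α : Type*} : List α → RegularExpression α → Set (RegularExpression α)
  | [], E => {E}
  | a :: w, E => ⋃ F ∈ aderiv a E, aderivWord w F

/-- Left quotient of a language by a word. -/
def lquot {α : Type*} (w : List α) (L : Language α) : Language α := {v | w ++ v ∈ L}

lemma aderiv_mul {α : Type*} (a : α) (E₁ E₂ : RegularExpression α) :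
    aderiv a (E₁ * E₂) =
      if [] ∈ E₁.matches' then ((· * E₂) '' aderiv a E₁) ∪ aderiv a E₂
      else (· * E₂) '' aderiv a E₁ := rfl

lemma mem_aderiv_mul {α : Type*} {a : α} {E₁ E₂ H : RegularExpression α}
    (h : H ∈ aderiv a (E₁ * E₂)) :
    (∃ F ∈ aderiv a E₁, H = F * E₂) ∨ H ∈ aderiv a E₂ := by
  rw [aderiv_mul] at h
  split_ifs at h with hε
  · rcases h with ⟨F, hF, rfl⟩ | h
    · exact Or.inl ⟨F, hF, rfl⟩
    · exact Or.inr h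
  · obtain ⟨F, hF, rfl⟩ := h
    exact Or.inl ⟨F, hF, rfl⟩

lemma mul_mem_aderiv_mul {α : Type*} {a : α} {E₁ F : RegularExpression α}
    (E₂ : RegularExpression α) (hF : F ∈ aderiv a E₁) :
    F * E₂ ∈ aderiv a (E₁ * E₂) := by
  rw [aderiv_mul]
  split_ifs
  · exact Or.inl ⟨F, hF, rfl⟩
  · exact ⟨F, hF, rfl⟩


lemma mem_aderivWord_cons {α : Type*} {a : α} {w : List α} {E G : RegularExpression α} :
    G ∈ aderivWord (a :: w) E ↔ ∃ F ∈ aderiv a E, G ∈ aderivWord w F := by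
  simp [aderivWord]

theorem antimirov_comp_bounds {α : Type*} (E₁ E₂ : RegularExpression α) (a : α) (w : List α) :
    (· * E₂) '' aderivWord (a :: w) E₁ ⊆ aderivWord (a :: w) (E₁ * E₂) ∧
      aderivWord (a :: w) (E₁ * E₂) ⊆
        ((· * E₂) '' aderivWord (a :: w) E₁) ∪
          ⋃ v ∈ {v : List α | v ≠ [] ∧ v <:+ a :: w}, aderivWord v E₂ := by
  induction w generalizing a E₁ with
  | nil =>
    constructor
    · rintro x ⟨F', hF', rfl⟩
      rw [mem_aderivWord_cons] at hF' ⊢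
      obtain ⟨F, hF, hF'⟩ := hF'
      simp only [aderivWord, Set.mem_singleton_iff] at hF'
      subst hF'
      exact ⟨F' * E₂, mul_mem_aderiv_mul E₂ hF, rfl⟩
    · intro G hG
      rw [mem_aderivWord_cons] at hG
      obtain ⟨H, hH, hG⟩ := hG
      simp only [aderivWord, Set.mem_singleton_iff] at hG
      subst hG
      rcases mem_aderiv_mul hH with ⟨F, hF, rfl⟩ | hH
      · left
        refine ⟨F, ?_, rfl⟩
        rw [mem_aderivWord_cons]
        exact ⟨F, hF, rfl⟩
      · right
        refine Set.mem_biUnion (show [a] ∈ {v : List α | v ≠ [] ∧ v <:+ [a]} by simp) ?_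
        rw [mem_aderivWord_cons]
        exact ⟨G, hH, rfl⟩
  | cons b w ih =>
    constructor
    · rintro x ⟨F', hF', rfl⟩
      rw [mem_aderivWord_cons] at hF' ⊢
      obtain ⟨F, hF, hF'⟩ := hF'
      exact ⟨F * E₂, mul_mem_aderiv_mul E₂ hF, (ih F b).1 ⟨F', hF', rfl⟩⟩
    · intro G hG
      rw [mem_aderivWord_cons] at hG
      obtain ⟨H, hH, hG⟩ := hG
      rcases mem_aderiv_mul hH with ⟨F, hF, rfl⟩ | hH
      · rcases (ih F b).2 hG with ⟨F', hF', rfl⟩ | hG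
        · left
          refine ⟨F', ?_, rfl⟩
          rw [mem_aderivWord_cons]
          exact ⟨F, hF, hF'⟩
        · right
          simp only [Set.mem_iUnion, Set.mem_setOf_eq, exists_prop] at hG ⊢
          obtain ⟨v, ⟨hv, hsuf⟩, hGv⟩ := hG
          exact ⟨v, ⟨hv, hsuf.trans (List.suffix_cons a (b :: w))⟩, hGv⟩
      · right
        refine Set.mem_biUnion (show a :: b :: w ∈ {v : List α | v ≠ [] ∧ v <:+ a :: b :: w} by
          simp) ?_
        rw [mem_aderivWord_cons]
        exact ⟨H, hH, hG⟩
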